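/- Let λ_R(p) = √(c²R⁻²|p|² + m²c⁴) and a₊(R⁻¹p) = √((1 + mc²/λ_R(p))/2). Then for all p,q ∈ ℝ³ and R > 0: |a₊(R⁻¹p) − a₊(R⁻¹(p−q))| ≤ √2 |q| / (4mcR). -/

import Mathlib

noncomputable section
open MeasureTheory Filter Set Matrix
open scoped Real ENNReal RealInnerProductSpace FourierTransform

abbrev R3 : Type := EuclideanSpace ℝ (Fin 3)
abbrev C4 : Type := EuclideanSpace ℂ (Fin 4)
abbrev C2 : Type := EuclideanSpace ℂ (Fin 2)

/-- `λ(p) = √(c²|p|² + m²c⁴)` -/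
def lam (m c : ℝ) (p : R3) : ℝ := Real.sqrt (c ^ 2 * ‖p‖ ^ 2 + m ^ 2 * c ^ 4)

/-- `a₊(p) = √((1 + mc²/λ(p))/2)` -/
def aplus (m c : ℝ) (p : R3) : ℝ := Real.sqrt ((1 + m * c ^ 2 / lam m c p) / 2)

/-- `a₋(p) = √((1 − mc²/λ(p))/2)` -/
def aminus (m c : ℝ) (p : R3) : ℝ := Real.sqrt ((1 - m * c ^ 2 / lam m c p) / 2)

lemma lam_sq (m c : ℝ) (hm : 0 < m) (hc : 0 < c) (p : R3) :
    (lam m c p) ^ 2 = c ^ 2 * ‖p‖ ^ 2 + m ^ 2 * c ^ 4 :=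
  Real.sq_sqrt (by positivity)

lemma lam_ge (m c : ℝ) (hm : 0 < m) (hc : 0 < c) (p : R3) : m * c ^ 2 ≤ lam m c p := by
  rw [lam, show m * c ^ 2 = Real.sqrt ((m * c ^ 2) ^ 2) from (Real.sqrt_sq (by positivity)).symm]
  apply Real.sqrt_le_sqrt
  nlinarith [sq_nonneg (c * ‖p‖)]

lemma lam_ge_norm (m c : ℝ) (hm : 0 < m) (hc : 0 < c) (p : R3) : c * ‖p‖ ≤ lam m c p := by
  rw [lam, show c * ‖p‖ = Real.sqrt ((c * ‖p‖) ^ 2) from (Real.sqrt_sq (by positivity)).symm]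
  apply Real.sqrt_le_sqrt
  nlinarith [sq_nonneg (m * c ^ 2)]

lemma lam_lip (m c : ℝ) (hm : 0 < m) (hc : 0 < c) (a b : R3) :
    lam m c a ≤ lam m c b + c * ‖a - b‖ := by
  have hb := lam_sq m c hm hc b
  have hn := lam_ge_norm m c hm hc b
  have ht : ‖a‖ ≤ ‖b‖ + ‖a - b‖ := by
    have := norm_sub_norm_le a b; linarith
  have h1 : ‖a‖ ^ 2 ≤ (‖b‖ + ‖a - b‖) ^ 2 :=
    pow_le_pow_left₀ (norm_nonneg a) ht 2
  have h2 : c ^ 2 * ‖a‖ ^ 2 ≤ c ^ 2 * (‖b‖ + ‖a - b‖) ^ 2 :=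
    mul_le_mul_of_nonneg_left h1 (sq_nonneg c)
  have h3 : c * ‖b‖ * (c * ‖a - b‖) ≤ lam m c b * (c * ‖a - b‖) :=
    mul_le_mul_of_nonneg_right hn (by positivity)
  have hnn : 0 ≤ lam m c b := Real.sqrt_nonneg _
  rw [lam, show lam m c b + c * ‖a - b‖ =
      Real.sqrt ((lam m c b + c * ‖a - b‖) ^ 2) from (Real.sqrt_sq (by positivity)).symm]
  apply Real.sqrt_le_sqrt
  nlinarith [norm_nonneg (a - b)]

lemma sqrt_diff_bound (x y : ℝ) (hx : 1/2 ≤ x) (hy : 1/2 ≤ y) :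
    |Real.sqrt x - Real.sqrt y| ≤ |x - y| / Real.sqrt 2 := by
  have h2 : (0:ℝ) < Real.sqrt 2 := Real.sqrt_pos.mpr (by norm_num)
  have hsx : Real.sqrt x ^ 2 = x := Real.sq_sqrt (by linarith)
  have hsy : Real.sqrt y ^ 2 = y := Real.sq_sqrt (by linarith)
  have hhx : Real.sqrt (1/2) ≤ Real.sqrt x := Real.sqrt_le_sqrt hx
  have hhy : Real.sqrt (1/2) ≤ Real.sqrt y := Real.sqrt_le_sqrt hy
  have hh : Real.sqrt (1/2) ^ 2 = 1/2 := Real.sq_sqrt (by norm_num)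
  have hnn : (0:ℝ) ≤ Real.sqrt (1/2) := Real.sqrt_nonneg _
  have hst : 1/2 ≤ Real.sqrt x * Real.sqrt y := by
    nlinarith [mul_le_mul hhx hhy hnn (Real.sqrt_nonneg x)]
  have hsum : 2 ≤ (Real.sqrt x + Real.sqrt y) ^ 2 := by nlinarith
  have heq : (Real.sqrt x - Real.sqrt y) * (Real.sqrt x + Real.sqrt y) = x - y := by
    linear_combination hsx - hsy
  have key : 2 * (Real.sqrt x - Real.sqrt y) ^ 2 ≤ (x - y) ^ 2 := by
    calc 2 * (Real.sqrt x - Real.sqrt y) ^ 2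
        ≤ (Real.sqrt x - Real.sqrt y) ^ 2 * (Real.sqrt x + Real.sqrt y) ^ 2 := by
          nlinarith [mul_le_mul_of_nonneg_left hsum (sq_nonneg (Real.sqrt x - Real.sqrt y))]
      _ = (x - y) ^ 2 := by rw [← mul_pow, heq]
  rw [le_div_iff₀ h2, ← pow_le_pow_iff_left₀ (by positivity) (abs_nonneg (x - y)) two_ne_zero,
    mul_pow, sq_abs, sq_abs, Real.sq_sqrt (by norm_num : (0:ℝ) ≤ 2)]
  linarith

/-- `|a₊(R⁻¹p) − a₊(R⁻¹(p−q))| ≤ √2 |q| / (4mcR)`. -/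
theorem aplus_difference_estimate (m c R : ℝ) (hm : 0 < m) (hc : 0 < c) (hR : 0 < R)
    (p q : R3) :
    |aplus m c (R⁻¹ • p) - aplus m c (R⁻¹ • (p - q))| ≤
      Real.sqrt 2 * ‖q‖ / (4 * m * c * R) := by
  set a : R3 := R⁻¹ • p with ha
  set b : R3 := R⁻¹ • (p - q) with hb
  have hab : a - b = R⁻¹ • q := by rw [ha, hb, ← smul_sub]; congr 1; abel
  have hnormab : ‖a - b‖ = ‖q‖ / R := by
    rw [hab, norm_smul, norm_inv, Real.norm_eq_abs, abs_of_pos hR, inv_mul_eq_div]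
  set L1 := lam m c a with hL1
  set L2 := lam m c b with hL2
  have hL1ge : m * c ^ 2 ≤ L1 := lam_ge m c hm hc a
  have hL2ge : m * c ^ 2 ≤ L2 := lam_ge m c hm hc b
  have hL1pos : 0 < L1 := lt_of_lt_of_le (by positivity) hL1ge
  have hL2pos : 0 < L2 := lt_of_lt_of_le (by positivity) hL2ge
  have hlip : |L1 - L2| ≤ c * ‖a - b‖ := by
    rw [abs_sub_le_iff]
    constructor
    · linarith [lam_lip m c hm hc a b]
    · rw [show ‖a - b‖ = ‖b - a‖ from norm_sub_rev a b]
      linarith [lam_lip m c hm hc b a]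
  set x := (1 + m * c ^ 2 / L1) / 2 with hx
  set y := (1 + m * c ^ 2 / L2) / 2 with hy
  have hx2 : 1/2 ≤ x := by
    rw [hx]; have : 0 ≤ m * c ^ 2 / L1 := by positivity
    linarith
  have hy2 : 1/2 ≤ y := by
    rw [hy]; have : 0 ≤ m * c ^ 2 / L2 := by positivity
    linarith
  have hdiff : |x - y| ≤ ‖q‖ / (2 * m * c * R) := by
    have hxy : x - y = m * c ^ 2 * (L2 - L1) / (2 * L1 * L2) := by
      rw [hx, hy]; field_simp; ring
    rw [hxy, abs_div, abs_mul, abs_of_pos (show (0:ℝ) < m * c ^ 2 by positivity),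
      abs_of_pos (show (0:ℝ) < 2 * L1 * L2 by positivity)]
    rw [div_le_div_iff₀ (by positivity) (by positivity)]
    have h1 : |L2 - L1| ≤ c * (‖q‖ / R) := by
      rw [abs_sub_comm, ← hnormab]; exact hlip
    have h2 : m * c ^ 2 * |L2 - L1| ≤ m * c ^ 2 * (c * (‖q‖ / R)) :=
      mul_le_mul_of_nonneg_left h1 (by positivity)
    have h3 : (m * c ^ 2) * (m * c ^ 2) ≤ L1 * L2 :=
      mul_le_mul hL1ge hL2ge (by positivity) hL1pos.le
    have hq : 0 ≤ ‖q‖ := norm_nonneg q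
    calc m * c ^ 2 * |L2 - L1| * (2 * m * c * R)
        ≤ m * c ^ 2 * (c * (‖q‖ / R)) * (2 * m * c * R) := by
          apply mul_le_mul_of_nonneg_right h2 (by positivity)
      _ = ‖q‖ * (2 * ((m * c ^ 2) * (m * c ^ 2))) := by field_simp
      _ ≤ ‖q‖ * (2 * (L1 * L2)) := by
          apply mul_le_mul_of_nonneg_left (by linarith) hq
      _ = ‖q‖ * (2 * L1 * L2) := by ring
  have hmain : |aplus m c a - aplus m c b| ≤ |x - y| / Real.sqrt 2 := by
    rw [aplus, aplus, ← hL1, ← hL2, ← hx, ← hy]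
    exact sqrt_diff_bound x y hx2 hy2
  have h2 : (0:ℝ) < Real.sqrt 2 := Real.sqrt_pos.mpr (by norm_num)
  have hs2 : Real.sqrt 2 * Real.sqrt 2 = 2 := Real.mul_self_sqrt (by norm_num)
  have hfin : |x - y| / Real.sqrt 2 ≤ Real.sqrt 2 * ‖q‖ / (4 * m * c * R) := by
    rw [div_le_div_iff₀ h2 (by positivity)]
    calc |x - y| * (4 * m * c * R) ≤ (‖q‖ / (2 * m * c * R)) * (4 * m * c * R) := by
          apply mul_le_mul_of_nonneg_right hdiff (by positivity)
      _ = 2 * ‖q‖ := by field_simp; ring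
      _ = Real.sqrt 2 * ‖q‖ * Real.sqrt 2 := by rw [mul_comm (Real.sqrt 2) ‖q‖, mul_assoc, hs2]; ring
  linarith
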